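/- Let E be a finite-dimensional complex vector space and let f : E → E be an invertible linear map. Then there exists a unique linear map g : E → E whose spectrum is contained in Σ₁ such that f = exp(2πi·g). -/

import Mathlib

open Complex

noncomputable section

/-- The set Σ: complex numbers `α` with `-1 ≤ Re α ≤ 0`, `Im α ≥ 0` if `Re α = -1`,
and `Im α < 0` if `Re α = 0`. -/
def SigmaSet : Set ℂ :=
  {α : ℂ | -1 ≤ α.re ∧ α.re ≤ 0 ∧ (α.re = -1 → 0 ≤ α.im) ∧ (α.re = 0 → α.im < 0)}

/-- The set Σ₁ := Σ + 1. -/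
def Sigma1 : Set ℂ := {α : ℂ | α - 1 ∈ SigmaSet}

/-- The constant `2πi`. -/
def twoPiI : ℂ := 2 * Real.pi * Complex.I

/-- The exponential `exp(2πi·f)` of an endomorphism `f`. -/
def expEnd {E : Type*} [NormedAddCommGroup E] [NormedSpace ℂ E] (f : E →L[ℂ] E) :
    E →L[ℂ] E :=
  NormedSpace.exp (twoPiI • f)

lemma twoPiI_ne_zero : twoPiI ≠ 0 := by
  simp [twoPiI, Real.pi_ne_zero, Complex.I_ne_zero]

lemma mem_Sigma1_iff {a : ℂ} :
    a ∈ Sigma1 ↔ 0 ≤ a.re ∧ a.re ≤ 1 ∧ (a.re = 0 → 0 ≤ a.im) ∧ (a.re = 1 → a.im < 0) := by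
  simp only [Sigma1, SigmaSet, Set.mem_setOf_eq, Complex.sub_re, Complex.sub_im,
    Complex.one_re, Complex.one_im]
  constructor
  · rintro ⟨h1, h2, h3, h4⟩
    refine ⟨by linarith, by linarith, fun h => by simpa using h3 (by linarith), fun h => by
      simpa using h4 (by linarith)⟩
  · rintro ⟨h1, h2, h3, h4⟩
    refine ⟨by linarith, by linarith, fun h => by simpa using h3 (by linarith), fun h => by
      simpa using h4 (by linarith)⟩

/-- the integer correction -/
def sK (l : ℂ) : ℕ := if l.arg < 0 ∨ (l.arg = 0 ∧ 1 < ‖l‖) then 1 else 0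

def sLog (l : ℂ) : ℂ := (Complex.log l + (sK l : ℂ) * twoPiI) / twoPiI

lemma exp_twoPiI_sLog {l : ℂ} (hl : l ≠ 0) : Complex.exp (twoPiI * sLog l) = l := by
  rw [sLog, mul_div_cancel₀ _ twoPiI_ne_zero, Complex.exp_add, Complex.exp_log hl]
  rcases Nat.lt_or_ge (sK l) 1 with h | h
  · interval_cases k : sK l <;> simp
  · have : sK l = 1 := by unfold sK at *; split at h <;> simp_all
    rw [this]
    simp [twoPiI, Complex.exp_two_pi_mul_I]

lemma sLog_re (l : ℂ) : (sLog l).re = (l.arg + sK l * (2 * Real.pi)) / (2 * Real.pi) := by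
  have hpi : (2*Real.pi) ≠ 0 := by positivity
  rw [sLog, Complex.div_re]
  simp [twoPiI, Complex.normSq_apply, Complex.add_re, Complex.add_im, Complex.mul_re,
    Complex.mul_im, Complex.log_re, Complex.log_im]
  field_simp

lemma sLog_im (l : ℂ) : (sLog l).im = -Real.log ‖l‖ / (2 * Real.pi) := by
  have hpi : (2*Real.pi) ≠ 0 := by positivity
  rw [sLog, Complex.div_im]
  simp [twoPiI, Complex.normSq_apply, Complex.add_re, Complex.add_im, Complex.mul_re,
    Complex.mul_im, Complex.log_re, Complex.log_im]
  field_simp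

lemma sLog_mem_Sigma1 {l : ℂ} (hl : l ≠ 0) : sLog l ∈ Sigma1 := by
  have hpi : (0:ℝ) < 2 * Real.pi := by positivity
  have harg1 : -Real.pi < l.arg := Complex.neg_pi_lt_arg l
  have harg2 : l.arg ≤ Real.pi := Complex.arg_le_pi l
  have habs : 0 < ‖l‖ := norm_pos_iff.mpr hl
  rw [mem_Sigma1_iff, sLog_re, sLog_im]
  unfold sK
  split
  · next h =>
    rcases h with h | ⟨h0, h1⟩
    · -- arg < 0, k = 1
      push_cast
      constructor
      · apply div_nonneg _ hpi.le; nlinarith [Real.pi_pos]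
      refine ⟨by rw [div_le_one hpi]; nlinarith, fun hre => ?_, fun hre => ?_⟩
      · exfalso
        rw [div_eq_zero_iff] at hre
        rcases hre with hre | hre <;> nlinarith [Real.pi_pos]
      · exfalso
        rw [div_eq_one_iff_eq hpi.ne'] at hre
        nlinarith
    · -- arg = 0, abs > 1, k = 1
      push_cast
      rw [h0]
      have hlog : 0 < Real.log ‖l‖ := Real.log_pos h1
      constructor
      · positivity
      refine ⟨by rw [div_le_one hpi]; nlinarith, fun hre => ?_, fun _ => ?_⟩
      · exfalso; rw [div_eq_zero_iff] at hre; rcases hre with hre | hre <;> nlinarith [Real.pi_pos]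
      · apply div_neg_of_neg_of_pos _ hpi; linarith
  · next h =>
    push_neg at h
    obtain ⟨h1, h2⟩ := h
    push_cast
    simp only [zero_mul, add_zero]
    refine ⟨div_nonneg h1 hpi.le, ?_, fun hre => ?_, fun hre => ?_⟩
    · rw [div_le_one hpi]; nlinarith [Real.pi_pos]
    · have harg0 : l.arg = 0 := by
        field_simp at hre; simpa using hre
      have : ‖l‖ ≤ 1 := by by_contra hc; push_neg at hc; exact absurd (h2 harg0) (by linarith)
      have := Real.log_nonpos habs.le this
      apply div_nonneg (by linarith) hpi.le
    · exfalso
      rw [div_eq_one_iff_eq hpi.ne'] at hre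
      nlinarith [Real.pi_pos]



open Polynomial Finset

noncomputable section

lemma sigma1_exp_inj {a b : ℂ} (ha : a ∈ Sigma1) (hb : b ∈ Sigma1)
    (h : Complex.exp (twoPiI * a) = Complex.exp (twoPiI * b)) : a = b := by
  rw [mem_Sigma1_iff] at ha hb
  have h1 : Complex.exp (twoPiI * a - twoPiI * b) = 1 := by
    rw [Complex.exp_sub, h, div_self (Complex.exp_ne_zero _)]
  rw [Complex.exp_eq_one_iff] at h1
  obtain ⟨n, hn⟩ := h1
  have h2 : a - b = n := by
    have h3 : twoPiI * (a - b) = twoPiI * n := by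
      rw [mul_sub, hn, twoPiI]; ring
    exact mul_left_cancel₀ twoPiI_ne_zero h3
  have him : a.im = b.im := by
    have := congrArg Complex.im h2
    simp only [Complex.sub_im, Complex.intCast_im] at this
    linarith
  have hre : a.re - b.re = n := by
    have := congrArg Complex.re h2
    simpa using this
  obtain ⟨ha1, ha2, ha3, ha4⟩ := ha
  obtain ⟨hb1, hb2, hb3, hb4⟩ := hb
  have hn1 : (-1 : ℤ) ≤ n := by
    have : (-1 : ℝ) ≤ n := by rw [← hre]; linarith
    exact_mod_cast this
  have hn2 : n ≤ 1 := by
    have : (n : ℝ) ≤ 1 := by rw [← hre]; linarith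
    exact_mod_cast this
  interval_cases n
  · exfalso
    have hna : a.re = 0 := by push_cast at hre; linarith
    have hnb : b.re = 1 := by push_cast at hre; linarith
    have := ha3 hna
    have := hb4 hnb
    linarith
  · have h0 : a - b = 0 := by rw [h2]; norm_num
    exact sub_eq_zero.mp h0
  · exfalso
    have hna : a.re = 1 := by push_cast at hre; linarith
    have hnb : b.re = 0 := by push_cast at hre; linarith
    have := ha4 hna
    have := hb3 hnb
    linarith


def pExp (n : ℕ) : ℂ[X] := ∑ k ∈ range n, C ((k.factorial : ℂ))⁻¹ * X ^ k
def pLog (n : ℕ) : ℂ[X] := ∑ k ∈ range n, C ((-1) ^ (k+1) / (k : ℂ)) * X ^ k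

lemma pLog_coeff_zero (n : ℕ) : (pLog n).coeff 0 = 0 := by
  rw [pLog, finset_sum_coeff]
  rw [Finset.sum_eq_single 0]
  · simp
  · intro b _ hb
    simp [coeff_C_mul, coeff_X_pow, hb, Ne.symm hb]
  · intro h
    simp

lemma pExp_coeff_zero (n : ℕ) : (pExp (n+1)).coeff 0 = 1 := by
  rw [pExp, finset_sum_coeff]
  rw [Finset.sum_eq_single 0]
  · simp
  · intro b _ hb
    simp [coeff_C_mul, coeff_X_pow, hb, Ne.symm hb]
  · intro h
    simp at h

lemma X_dvd_pLog (n : ℕ) : X ∣ pLog n := by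
  rw [X_dvd_iff]; exact pLog_coeff_zero n

lemma X_dvd_pExp_sub_one (n : ℕ) : X ∣ (pExp (n+1) - 1) := by
  rw [X_dvd_iff, coeff_sub, pExp_coeff_zero]; simp

lemma derivative_pExp (m : ℕ) : derivative (pExp (m+1)) = pExp m := by
  rw [pExp, map_sum, Finset.sum_range_succ']
  simp only [derivative_C_mul, derivative_X_pow]
  rw [pExp]
  simp only [Nat.cast_zero, map_zero, zero_mul, mul_zero, pow_zero, add_zero]
  refine Finset.sum_congr rfl fun k _ => ?_
  rw [← mul_assoc, ← C_mul, Nat.add_sub_cancel]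
  have hk : ((k:ℂ)+1) ≠ 0 := Nat.cast_add_one_ne_zero k
  have hf : ((k.factorial : ℂ)) ≠ 0 := Nat.cast_ne_zero.mpr k.factorial_ne_zero
  congr 1
  rw [Nat.factorial_succ]
  push_cast
  field_simp

lemma derivative_pLog (m : ℕ) : derivative (pLog (m+1)) = ∑ j ∈ range m, (-X)^j := by
  rw [pLog, map_sum, Finset.sum_range_succ']
  simp only [derivative_C_mul, derivative_X_pow]
  simp only [Nat.cast_zero, map_zero, zero_mul, mul_zero, pow_zero, add_zero]
  refine Finset.sum_congr rfl fun k _ => ?_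
  rw [← mul_assoc, ← C_mul, Nat.add_sub_cancel]
  have hk : ((k : ℂ) + 1) ≠ 0 := Nat.cast_add_one_ne_zero k
  have h1 : (-1 : ℂ) ^ (k + 1 + 1) / (↑(k + 1)) * (↑(k + 1)) = (-1) ^ k := by
    push_cast
    field_simp
    ring
  rw [h1, map_pow, map_neg, map_one, ← neg_pow]

lemma geom_pLog (m : ℕ) : (1 + X : ℂ[X]) * ∑ j ∈ range m, (-X)^j = 1 - (-X)^m := by
  have h := geom_sum_mul (-X : ℂ[X]) m
  have h2 : (1 + X : ℂ[X]) = -((-X) - 1) := by ring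
  rw [h2, neg_mul, mul_comm, h]
  ring

end
noncomputable section
open Polynomial Finset

lemma pExp_succ (m : ℕ) : pExp (m+1) = pExp m + C ((m.factorial : ℂ))⁻¹ * X ^ m := by
  rw [pExp, pExp, Finset.sum_range_succ]

lemma key1 (m : ℕ) :
    X ^ (m+1) ∣ (pExp (m+1)).comp (pLog (m+1)) - (1 + X) := by
  set L := pLog (m+1) with hL
  set F := (pExp (m+1)).comp L with hF
  set G := F - (1 + X) with hG
  have hF' : derivative F = derivative L * (pExp m).comp L := by
    rw [hF, derivative_comp, derivative_pExp]
  have hgeom : (1 + X) * derivative L = 1 - (-X)^m := by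
    rw [hL, derivative_pLog, geom_pLog]
  have hEm : (pExp m).comp L = F - C ((m.factorial : ℂ))⁻¹ * L ^ m := by
    rw [hF, pExp_succ, add_comp, mul_comp, C_comp, X_pow_comp]
    ring
  have hH : X ^ m ∣ (1 + X) * derivative F - F := by
    have e1 : (1 + X) * derivative F - F
        = -((-X)^m * ((pExp m).comp L)) - C ((m.factorial : ℂ))⁻¹ * L ^ m := by
      rw [hF', ← mul_assoc, hgeom, hEm]; ring
    rw [e1]
    apply dvd_sub
    · rw [dvd_neg]
      have h2 : (X:ℂ[X])^m ∣ (-X)^m := by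
        rw [neg_pow]; exact dvd_mul_left _ _
      exact h2.mul_right _
    · exact (pow_dvd_pow_of_dvd (X_dvd_pLog (m+1)) m).mul_left _
  have hdG : derivative G = derivative F - 1 := by
    rw [hG, derivative_sub, derivative_add, derivative_one, derivative_X]; ring
  have hH' : X ^ m ∣ (1 + X) * derivative G - G := by
    have e2 : (1 + X) * derivative G - G = (1 + X) * derivative F - F := by
      rw [hdG, hG]; ring
    rw [e2]; exact hH
  have hG0 : G.coeff 0 = 0 := by
    rw [hG, coeff_sub, coeff_zero_eq_eval_zero, hF, eval_comp]
    have hLz : eval 0 L = 0 := by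
      rw [← coeff_zero_eq_eval_zero]; exact pLog_coeff_zero _
    rw [hLz, ← coeff_zero_eq_eval_zero, pExp_coeff_zero]
    simp
  have main : ∀ k, k ≤ m → G.coeff k = 0 := by
    intro k
    induction k with
    | zero => intro _; exact hG0
    | succ j ih =>
      intro hj
      have h0 : G.coeff j = 0 := ih (by omega)
      have hHj : ((1 + X) * derivative G - G).coeff j = 0 := by
        rw [X_pow_dvd_iff] at hH'
        exact hH' j (by omega)
      have hXG : (X * derivative G).coeff j = 0 := by
        cases j with
        | zero => rw [mul_coeff_zero, coeff_X_zero, zero_mul]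
        | succ i => rw [coeff_X_mul, coeff_derivative, h0, zero_mul]
      rw [coeff_sub, add_mul, one_mul, coeff_add, hXG, h0, coeff_derivative] at hHj
      have hne : ((j:ℂ) + 1) ≠ 0 := Nat.cast_add_one_ne_zero j
      have hz : G.coeff (j+1) * ((j:ℂ) + 1) = 0 := by
        push_cast at hHj ⊢
        linear_combination hHj
      exact (mul_eq_zero.mp hz).resolve_right hne
  rw [X_pow_dvd_iff]
  intro d hd
  rw [hG] at main
  exact main d (by omega)

lemma key2 (m : ℕ) :
    X ^ (m+1) ∣ (pLog (m+1)).comp (pExp (m+1) - 1) - X := by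
  set E := pExp (m+1) with hE
  set W := (∑ j ∈ range m, (-X : ℂ[X])^j).comp (E - 1) with hWdef
  set F := (pLog (m+1)).comp (E - 1) with hF
  have hXE : X ∣ E - 1 := X_dvd_pExp_sub_one m
  have hW : E * W = 1 - (-(E-1))^m := by
    have h2 := congrArg (fun p : ℂ[X] => p.comp (E - 1)) (geom_pLog m)
    simp only [mul_comp, add_comp, one_comp, X_comp, sub_comp, pow_comp, neg_comp] at h2
    have h3 : (1 + (E - 1)) = E := by ring
    rw [h3] at h2
    exact h2
  have hF' : derivative F = pExp m * W := by
    rw [hF, derivative_comp, derivative_pLog, derivative_sub, derivative_one, sub_zero, hE,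
      derivative_pExp, mul_comm]
  have hdvd : X ^ m ∣ derivative F - 1 := by
    have e1 : derivative F - 1
        = -(-(E-1))^m - (C ((m.factorial:ℂ))⁻¹ * X ^ m) * W := by
      rw [hF']
      have h4 : pExp m = E - C ((m.factorial:ℂ))⁻¹ * X ^ m := by
        rw [hE, pExp_succ]; ring
      rw [h4, sub_mul, hW]; ring
    rw [e1]
    apply dvd_sub
    · rw [dvd_neg]
      exact pow_dvd_pow_of_dvd ((dvd_neg).mpr hXE) m
    · exact (dvd_mul_left ((X:ℂ[X])^m) (C ((m.factorial:ℂ))⁻¹)).mul_right _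
  have hG0 : F.coeff 0 = 0 := by
    rw [coeff_zero_eq_eval_zero, hF, eval_comp]
    have hz : eval 0 (E - 1) = 0 := by
      rw [← coeff_zero_eq_eval_zero]
      rw [X_dvd_iff] at hXE
      exact hXE
    rw [hz, ← coeff_zero_eq_eval_zero]
    exact pLog_coeff_zero _
  rw [X_pow_dvd_iff]
  intro d hd
  rcases d with _ | j
  · rw [coeff_sub, hG0, coeff_X_zero, sub_zero]
  · rw [X_pow_dvd_iff] at hdvd
    have hj := hdvd j (by omega)
    rw [coeff_sub, coeff_derivative] at hj
    have hne : ((j:ℂ) + 1) ≠ 0 := Nat.cast_add_one_ne_zero j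
    rw [coeff_sub, coeff_X]
    rcases Nat.eq_zero_or_pos j with h | h
    · subst h
      have h2 : F.coeff 1 * ((0:ℂ)+1) - 1 = 0 := by simpa using hj
      have hF1 : F.coeff 1 = 1 := by
        have := h2
        push_cast at this
        linear_combination this
      simp [hF1]
    · have hcoeff1 : (1:ℂ[X]).coeff j = 0 := by
        simp [coeff_one, Nat.pos_iff_ne_zero.mp h]
      rw [hcoeff1, sub_zero] at hj
      have hz : F.coeff (j+1) = 0 := (mul_eq_zero.mp hj).resolve_right hne
      rw [hz]
      have hne1 : ¬ ((1:ℕ) = j + 1) := by omega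
      simp [hne1]
      omega

end


open Polynomial Finset

noncomputable section

variable {E : Type*} [NormedAddCommGroup E] [NormedSpace ℂ E] [FiniteDimensional ℂ E]

local notation "A" => E →L[ℂ] E

lemma aeval_C_mul_X_pow (b : A) (c : ℂ) (k : ℕ) :
    aeval b (C c * X^k : ℂ[X]) = c • b^k := by
  rw [map_mul, aeval_C, map_pow, aeval_X, Algebra.algebraMap_eq_smul_one, smul_mul_assoc, one_mul]

lemma pow_apply_eq_zero_of_le {b : A} {x : E} {n k : ℕ} (hnk : n ≤ k) (h : (b^n) x = 0) :
    (b^k) x = 0 := by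
  have : b ^ k = b ^ (k - n) * b ^ n := by
    rw [← pow_add]; congr 1; omega
  rw [this, ContinuousLinearMap.mul_apply, h, map_zero]

lemma exp_apply_eq_aeval_pExp (b : A) (x : E) (n : ℕ) (h : (b^n) x = 0) :
    NormedSpace.exp b x = (aeval b (pExp n)) x := by
  have hsum : Summable fun k => ((k.factorial : ℂ))⁻¹ • b^k :=
    NormedSpace.expSeries_summable' b
  have h1 : NormedSpace.exp b = ∑' k : ℕ, ((k.factorial : ℂ))⁻¹ • b^k := by
    rw [NormedSpace.exp_eq_tsum ℂ]
  have h2 : NormedSpace.exp b x = ∑' k : ℕ, ((k.factorial : ℂ))⁻¹ • (b^k) x := by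
    rw [h1]
    have := (ContinuousLinearMap.apply ℂ E x).map_tsum hsum
    simpa using this
  rw [h2]
  rw [tsum_eq_sum (s := range n) (by
    intro k hk
    rw [pow_apply_eq_zero_of_le (by simpa using hk) h, smul_zero])]
  rw [pExp, map_sum, ContinuousLinearMap.sum_apply]
  refine Finset.sum_congr rfl fun k _ => ?_
  rw [aeval_C_mul_X_pow, ContinuousLinearMap.smul_apply]

lemma exp_algebraMap_add (c : ℂ) (b : A) :
    NormedSpace.exp (algebraMap ℂ (E →L[ℂ] E) c + b)
      = Complex.exp c • NormedSpace.exp b := by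
  have hcomm : Commute (algebraMap ℂ (E →L[ℂ] E) c) b := Algebra.commutes c b
  rw [NormedSpace.exp_add_of_commute_of_mem_ball (𝕂 := ℂ) hcomm
      ((NormedSpace.expSeries_radius_eq_top ℂ (E →L[ℂ] E)).symm ▸ edist_lt_top _ _)
      ((NormedSpace.expSeries_radius_eq_top ℂ (E →L[ℂ] E)).symm ▸ edist_lt_top _ _), ← NormedSpace.algebraMap_exp_comm,
    Complex.exp_eq_exp_ℂ, Algebra.algebraMap_eq_smul_one, smul_mul_assoc, one_mul]

lemma pow_apply_add_of_commute {b d : A} (h : Commute b d) {x : E} (hx : d x = 0) (k : ℕ) :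
    ((b + d)^k) x = (b^k) x := by
  induction k with
  | zero => rfl
  | succ k ih =>
    rw [pow_succ', pow_succ', ContinuousLinearMap.mul_apply, ih, ContinuousLinearMap.mul_apply]
    have hd : d ((b^k) x) = 0 := by
      have : d * b^k = b^k * d := (h.pow_left k).eq.symm
      calc d ((b^k) x) = (d * b^k) x := rfl
        _ = (b^k * d) x := by rw [this]
        _ = (b^k) (d x) := rfl
        _ = 0 := by rw [hx, map_zero]
    rw [ContinuousLinearMap.add_apply, hd, add_zero]

lemma aeval_apply_eq_of_eqOn {u v : A} {V : Submodule ℂ E}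
    (hu : ∀ y ∈ V, u y ∈ V) (huv : ∀ y ∈ V, u y = v y)
    (hv : ∀ y ∈ V, v y ∈ V) (p : ℂ[X]) {x : E} (hx : x ∈ V) :
    aeval u p x = aeval v p x := by
  have hpow : ∀ k, (u^k) x = (v^k) x ∧ (v^k) x ∈ V := by
    intro k
    induction k with
    | zero => exact ⟨rfl, by simpa using hx⟩
    | succ k ih =>
      obtain ⟨h1, h2⟩ := ih
      constructor
      · rw [pow_succ', pow_succ', ContinuousLinearMap.mul_apply, h1,
          ContinuousLinearMap.mul_apply, huv _ h2]
      · rw [pow_succ', ContinuousLinearMap.mul_apply]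
        exact hv _ h2
  rw [Polynomial.aeval_eq_sum_range, Polynomial.aeval_eq_sum_range,
    ContinuousLinearMap.sum_apply, ContinuousLinearMap.sum_apply]
  refine Finset.sum_congr rfl fun k _ => ?_
  rw [ContinuousLinearMap.smul_apply, ContinuousLinearMap.smul_apply, (hpow k).1]

end

lemma aeval_commute {E : Type*} [NormedAddCommGroup E] [NormedSpace ℂ E]
    [FiniteDimensional ℂ E] (b : E →L[ℂ] E) (p q : ℂ[X]) : Commute (aeval b p) (aeval b q) := by
  unfold Commute SemiconjBy
  rw [← map_mul, ← map_mul, mul_comm]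

lemma aeval_apply_add_of_commute {E : Type*} [NormedAddCommGroup E] [NormedSpace ℂ E]
    [FiniteDimensional ℂ E] {b d : E →L[ℂ] E} (h : Commute b d) {x : E} (hx : d x = 0) (p : ℂ[X]) :
    aeval (b + d) p x = aeval b p x := by
  rw [Polynomial.aeval_eq_sum_range, Polynomial.aeval_eq_sum_range,
    ContinuousLinearMap.sum_apply, ContinuousLinearMap.sum_apply]
  refine Finset.sum_congr rfl fun k _ => ?_
  rw [ContinuousLinearMap.smul_apply, ContinuousLinearMap.smul_apply,
    pow_apply_add_of_commute h hx]

lemma aeval_mem_of_mapsTo {E : Type*} [NormedAddCommGroup E] [NormedSpace ℂ E]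
    [FiniteDimensional ℂ E] {b : E →L[ℂ] E} {V : Submodule ℂ E} (hb : ∀ y ∈ V, b y ∈ V) (p : ℂ[X]) {x : E}
    (hx : x ∈ V) : aeval b p x ∈ V := by
  have hpow : ∀ k, (b^k) x ∈ V := by
    intro k
    induction k with
    | zero => simpa using hx
    | succ k ih =>
      rw [pow_succ', ContinuousLinearMap.mul_apply]
      exact hb _ ih
  rw [Polynomial.aeval_eq_sum_range, ContinuousLinearMap.sum_apply]
  apply Submodule.sum_mem
  intro k _
  rw [ContinuousLinearMap.smul_apply]
  exact Submodule.smul_mem _ _ (hpow k)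

lemma pExp_one : pExp 1 = 1 := by
  simp [pExp]

/-- the algebra equivalence between continuous linear endomorphisms and linear endomorphisms -/
def clmAlgEquiv (E : Type*) [NormedAddCommGroup E] [NormedSpace ℂ E] [FiniteDimensional ℂ E] :
    (E →L[ℂ] E) ≃ₐ[ℂ] Module.End ℂ E :=
  AlgEquiv.ofLinearEquiv
    (LinearMap.toContinuousLinearMap : (E →ₗ[ℂ] E) ≃ₗ[ℂ] (E →L[ℂ] E)).symm
    rfl (fun _ _ => rfl)

@[simp] lemma clmAlgEquiv_apply {E : Type*} [NormedAddCommGroup E] [NormedSpace ℂ E]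
    [FiniteDimensional ℂ E] (a : E →L[ℂ] E) (x : E) : clmAlgEquiv E a x = a x := rfl

lemma spectrum_clm_eq {E : Type*} [NormedAddCommGroup E] [NormedSpace ℂ E]
    [FiniteDimensional ℂ E] (a : E →L[ℂ] E) :
    spectrum ℂ a = spectrum ℂ (clmAlgEquiv E a) :=
  (AlgEquiv.spectrum_eq (clmAlgEquiv E) a).symm

lemma pow_sub_smul_apply_coe {E : Type*} [NormedAddCommGroup E] [NormedSpace ℂ E]
    [FiniteDimensional ℂ E] (a : E →L[ℂ] E) (l : ℂ) (k : ℕ) (x : E) :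
    ((clmAlgEquiv E a - l • (1 : Module.End ℂ E))^k) x
      = ((a - l • (1 : E →L[ℂ] E))^k) x := by
  induction k generalizing x with
  | zero => rfl
  | succ k ih =>
    rw [pow_succ', pow_succ', Module.End.mul_apply, ContinuousLinearMap.mul_apply]
    have hstep : ∀ y : E, (clmAlgEquiv E a - l • (1 : Module.End ℂ E)) y
        = (a - l • (1 : E →L[ℂ] E)) y := fun y => by simp
    rw [hstep, ih]

lemma pow_sub_smul_apply_eigen {E : Type*} [NormedAddCommGroup E] [NormedSpace ℂ E]
    [FiniteDimensional ℂ E] {f : E →L[ℂ] E} {c l : ℂ} {v : E} (hv : f v = c • v) (k : ℕ) :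
    ((f - l • (1 : E →L[ℂ] E))^k) v = (c - l)^k • v := by
  induction k with
  | zero => simp
  | succ k ih =>
    rw [pow_succ', ContinuousLinearMap.mul_apply, ih, map_smul,
      ContinuousLinearMap.sub_apply, hv, ContinuousLinearMap.smul_apply,
      ContinuousLinearMap.one_apply, ← sub_smul, smul_smul, ← pow_succ]

lemma exists_modular_interpolation (s : Finset ℂ) (n : ℕ) (Q : ℂ → ℂ[X]) :
    ∃ P : ℂ[X], ∀ l ∈ s, (X - C l)^n ∣ P - Q l := by
  classical
  induction s using Finset.induction_on with
  | empty => exact ⟨0, by simp⟩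
  | @insert a s ha ih =>
    obtain ⟨P₀, hP₀⟩ := ih
    obtain ⟨D, hD⟩ : ∃ D : ℂ[X], D = ∏ l ∈ s, (X - C l)^n := ⟨_, rfl⟩
    have hcop : IsCoprime ((X - C a)^n) D := by
      rw [hD]
      apply IsCoprime.prod_right
      intro l hl
      have hne : a - l ≠ 0 := sub_ne_zero.mpr (by rintro rfl; exact ha hl)
      exact (isCoprime_X_sub_C_of_isUnit_sub hne.isUnit).pow
    obtain ⟨u, v, huv⟩ := hcop
    refine ⟨P₀ + D * (v * (Q a - P₀)), ?_⟩
    intro l hl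
    rcases Finset.mem_insert.mp hl with rfl | hl
    · have he : P₀ + D * (v * (Q l - P₀)) - Q l
          = (u * (X - C l)^n) * (P₀ - Q l) := by
        have h1 : v * D = 1 - u * (X - C l)^n := by linear_combination huv
        calc P₀ + D * (v * (Q l - P₀)) - Q l
            = (P₀ - Q l) - (v * D) * (P₀ - Q l) := by ring
          _ = (u * (X - C l)^n) * (P₀ - Q l) := by rw [h1]; ring
      rw [he]
      exact Dvd.dvd.mul_right (dvd_mul_left _ u) _
    · have h2 : (X - C l)^n ∣ D := hD ▸ Finset.dvd_prod_of_mem _ hl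
      have he : P₀ + D * (v * (Q a - P₀)) - Q l
          = (P₀ - Q l) + D * (v * (Q a - P₀)) := by ring
      rw [he]
      exact dvd_add (hP₀ l hl) (h2.mul_right _)

set_option maxHeartbeats 1600000 in
theorem unique_log_with_spectrum_in_Sigma1
    {E : Type*} [NormedAddCommGroup E] [NormedSpace ℂ E] [FiniteDimensional ℂ E]
    (f : E →L[ℂ] E) (hf : IsUnit f) :
    ∃! g : E →L[ℂ] E, spectrum ℂ g ⊆ Sigma1 ∧ expEnd g = f := by
  classical
  rcases subsingleton_or_nontrivial E with hE | hE
  · have hsub : Subsingleton (E →L[ℂ] E) :=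
      ⟨fun a b => ContinuousLinearMap.ext fun x => Subsingleton.elim _ _⟩
    refine ⟨0, ⟨?_, Subsingleton.elim _ _⟩, fun y _ => Subsingleton.elim _ _⟩
    intro z hz
    rw [spectrum.mem_iff] at hz
    exact absurd (isUnit_of_subsingleton _) hz
  have hA : Nontrivial (E →L[ℂ] E) := by
    obtain ⟨x, hx⟩ := exists_ne (0 : E)
    refine ⟨1, 0, fun h => hx ?_⟩
    have := congrArg (fun t : E →L[ℂ] E => t x) h
    simpa using this
  set n := Module.finrank ℂ E with hn
  have hn1 : 0 < n := Module.finrank_pos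
  obtain ⟨nn, hnn⟩ : ∃ nn, n = nn + 1 := ⟨n - 1, by omega⟩
  have hSfin : (spectrum ℂ f).Finite := by
    rw [spectrum_clm_eq]
    exact Module.End.finite_spectrum _
  have hS0 : (0:ℂ) ∉ spectrum ℂ f := by
    intro h0
    rw [spectrum.zero_mem_iff] at h0
    exact h0 hf
  have hSne : (spectrum ℂ f).Nonempty := spectrum.nonempty f
  set Qp : ℂ → ℂ[X] :=
    fun l => C (sLog l) + C (twoPiI)⁻¹ * ((pLog n).comp (C l⁻¹ * X - 1)) with hQp
  obtain ⟨P, hP⟩ := exists_modular_interpolation hSfin.toFinset n Qp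
  set g := aeval f P with hg
  -- membership in generalized eigenspace kills (f - l)^n
  have hgen : ∀ l : ℂ, ∀ x ∈ (clmAlgEquiv E f).maxGenEigenspace l,
      ((f - l • (1 : E →L[ℂ] E))^n) x = 0 := by
    intro l x hx
    rw [Module.End.maxGenEigenspace_eq_genEigenspace_finrank,
      Module.End.mem_genEigenspace_nat] at hx
    rw [← pow_sub_smul_apply_coe]
    exact hx
  -- generic exp expansion
  have expand : ∀ (h : E →L[ℂ] E) (c : ℂ) (x : E),
      (((twoPiI • h - algebraMap ℂ (E →L[ℂ] E) (twoPiI * c)))^n) x = 0 →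
      expEnd h x = Complex.exp (twoPiI * c) •
        ((aeval (twoPiI • h - algebraMap ℂ (E →L[ℂ] E) (twoPiI * c)) (pExp n)) x) := by
    intro h c x hx
    have hsplit : twoPiI • h = algebraMap ℂ (E →L[ℂ] E) (twoPiI * c)
        + (twoPiI • h - algebraMap ℂ (E →L[ℂ] E) (twoPiI * c)) := by abel
    rw [expEnd]
    nth_rewrite 1 [hsplit]
    rw [exp_algebraMap_add, ContinuousLinearMap.smul_apply,
      exp_apply_eq_aeval_pExp _ x n hx]
  -- spanning
  have span : ∀ h₁ h₂ : E →L[ℂ] E,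
      (∀ l ∈ spectrum ℂ f, ∀ x ∈ (clmAlgEquiv E f).maxGenEigenspace l, h₁ x = h₂ x) →
      h₁ = h₂ := by
    intro h₁ h₂ hagree
    have htop := Module.End.iSup_maxGenEigenspace_eq_top (clmAlgEquiv E f)
    have hker : ∀ l : ℂ, (clmAlgEquiv E f).maxGenEigenspace l
        ≤ LinearMap.ker (clmAlgEquiv E (h₁ - h₂)) := by
      intro l y hy
      rw [LinearMap.mem_ker]
      by_cases hl : l ∈ spectrum ℂ f
      · have h2 := hagree l hl y hy
        show (h₁ - h₂) y = 0
        rw [ContinuousLinearMap.sub_apply, h2, sub_self]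
      · have hbot : (clmAlgEquiv E f).maxGenEigenspace l = ⊥ := by
          by_contra hne
          apply hl
          rw [spectrum_clm_eq, ← Module.End.hasEigenvalue_iff_mem_spectrum]
          apply Module.End.hasEigenvalue_of_hasGenEigenvalue
            (k := Module.finrank ℂ E)
          rw [Module.End.hasGenEigenvalue_iff,
            ← Module.End.maxGenEigenspace_eq_genEigenspace_finrank]
          exact hne
        rw [hbot] at hy
        have : y = 0 := by simpa using hy
        rw [this]
        simp
    have hker2 : LinearMap.ker (clmAlgEquiv E (h₁ - h₂)) = ⊤ := by
      rw [← top_le_iff, ← htop]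
      exact iSup_le hker
    apply ContinuousLinearMap.ext
    intro x
    have hx0 : (h₁ - h₂) x = 0 := by
      have : x ∈ LinearMap.ker (clmAlgEquiv E (h₁ - h₂)) := hker2 ▸ Submodule.mem_top
      rw [LinearMap.mem_ker] at this
      exact this
    rw [ContinuousLinearMap.sub_apply, sub_eq_zero] at hx0
    exact hx0
  -- evaluation of P on the spectrum
  have hPeval : ∀ l ∈ spectrum ℂ f, Polynomial.eval l P = sLog l := by
    intro l hl
    have hl0 : l ≠ 0 := fun h0 => hS0 (h0 ▸ hl)
    obtain ⟨R, hR⟩ := hP l (hSfin.mem_toFinset.mpr hl)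
    have h1 : Polynomial.eval l (P - Qp l) = 0 := by
      obtain ⟨R, hR⟩ := hP l (hSfin.mem_toFinset.mpr hl)
      rw [hR, eval_mul, eval_pow, eval_sub, eval_X, eval_C, sub_self,
        zero_pow (by omega : n ≠ 0), zero_mul]
    have h2 : Polynomial.eval l (Qp l) = sLog l := by
      rw [hQp]
      simp only
      rw [eval_add, eval_C, eval_mul, eval_C, eval_comp, eval_sub, eval_mul, eval_C, eval_X,
        eval_one, inv_mul_cancel₀ hl0, sub_self, ← coeff_zero_eq_eval_zero, pLog_coeff_zero,
        mul_zero, add_zero]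
    rw [eval_sub, sub_eq_zero] at h1
    rw [h1, h2]
  -- spectrum of g
  have hgspec : spectrum ℂ g ⊆ Sigma1 := by
    rw [hg, spectrum.map_polynomial_aeval_of_nonempty f P hSne]
    rintro z ⟨l, hl, rfl⟩
    have hl0 : l ≠ 0 := fun h0 => hS0 (h0 ▸ hl)
    simp only
    rw [hPeval l hl]
    exact sLog_mem_Sigma1 hl0
  -- existence : expEnd g = f
  have hgexp : expEnd g = f := by
    apply span
    intro l hl x hx
    have hxn := hgen l x hx
    have hl0 : l ≠ 0 := fun h0 => hS0 (h0 ▸ hl)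
    obtain ⟨R, hR⟩ := hP l (hSfin.mem_toFinset.mpr hl)
    set LP : ℂ[X] := (pLog n).comp (C l⁻¹ * X - 1) with hLP
    set b0 := aeval f LP with hb0
    set d := aeval f (C twoPiI * ((X - C l)^n * R)) with hd
    have haevXC : aeval f (X - C l) = f - l • (1 : E →L[ℂ] E) := by
      rw [map_sub, aeval_X, aeval_C, Algebra.algebraMap_eq_smul_one]
    have hpoly : C twoPiI * P - C (twoPiI * sLog l) = LP + C twoPiI * ((X - C l)^n * R) := by
      have h1 : P = Qp l + (X - C l)^n * R := by linear_combination hR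
      have h3 : C twoPiI * C (twoPiI)⁻¹ = (1 : ℂ[X]) := by
        rw [← C_mul, mul_inv_cancel₀ twoPiI_ne_zero, C_1]
      have h4 : C twoPiI * C (sLog l) = C (twoPiI * sLog l) := by rw [← C_mul]
      rw [h1, hQp]
      simp only [← hLP]
      linear_combination LP * h3 + h4
    have hB : twoPiI • g - algebraMap ℂ (E →L[ℂ] E) (twoPiI * sLog l) = b0 + d := by
      have e1 : twoPiI • g - algebraMap ℂ (E →L[ℂ] E) (twoPiI * sLog l)
          = aeval f (C twoPiI * P - C (twoPiI * sLog l)) := by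
        rw [hg]
        simp only [map_sub, map_mul, aeval_C, Algebra.smul_def]
      rw [e1, hpoly, map_add, hb0, hd]
    have hcomm : Commute b0 d := by
      rw [hb0, hd]
      exact aeval_commute f _ _
    have hdx : d x = 0 := by
      rw [hd]
      have e2 : C twoPiI * ((X - C l)^n * R) = (C twoPiI * R) * (X - C l)^n := by ring
      rw [e2, map_mul, ContinuousLinearMap.mul_apply, map_pow, haevXC, hxn, map_zero]
    have haevm : aeval f (C l⁻¹ * X - 1) = l⁻¹ • f - 1 := by
      rw [map_sub, map_mul, aeval_C, aeval_X, map_one, ← Algebra.smul_def]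
    have hmfact : l⁻¹ • f - (1 : E →L[ℂ] E) = l⁻¹ • (f - l • 1) := by
      rw [smul_sub, smul_smul, inv_mul_cancel₀ hl0, one_smul]
    have hmn : ((aeval f (C l⁻¹ * X - 1))^n) x = 0 := by
      rw [haevm, hmfact, _root_.smul_pow, ContinuousLinearMap.smul_apply, hxn, smul_zero]
    have hb0n : (b0^n) x = 0 := by
      obtain ⟨T, hT⟩ := X_dvd_pLog n
      have eLP : LP = (C l⁻¹ * X - 1) * (T.comp (C l⁻¹ * X - 1)) := by
        rw [hLP, hT, mul_comp, X_comp]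
      have e2 : b0 ^ n
          = aeval f ((T.comp (C l⁻¹ * X - 1))^n * (C l⁻¹ * X - 1)^n) := by
        rw [hb0, ← map_pow, eLP, mul_pow, mul_comm ((C l⁻¹ * X - 1)^n) _]
      rw [e2, map_mul, ContinuousLinearMap.mul_apply]
      simp only [map_pow]
      rw [hmn, map_zero]
    have hBn : ((twoPiI • g - algebraMap ℂ (E →L[ℂ] E) (twoPiI * sLog l))^n) x = 0 := by
      rw [hB, pow_apply_add_of_commute hcomm hdx, hb0n]
    have hstep := expand g (sLog l) x hBn
    rw [exp_twoPiI_sLog hl0] at hstep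
    -- compute the aeval sum
    have hq1 := key1 nn
    rw [← hnn] at hq1
    obtain ⟨q1', hq1'⟩ := hq1
    have hcompkey : (pExp n).comp (pLog n) = 1 + X + X^n * q1' := by
      linear_combination hq1'
    have e3 : aeval b0 (pExp n) = aeval f ((pExp n).comp LP) := by
      rw [aeval_comp, hb0]
    have e4 : (pExp n).comp LP
        = 1 + (C l⁻¹ * X - 1) + (C l⁻¹ * X - 1)^n * q1'.comp (C l⁻¹ * X - 1) := by
      rw [hLP, ← comp_assoc, hcompkey]
      rw [add_comp, add_comp, one_comp, X_comp, mul_comp, pow_comp, X_comp]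
    have hsum : (aeval (b0 + d) (pExp n)) x = x + (l⁻¹ • f - 1) x := by
      rw [aeval_apply_add_of_commute hcomm hdx, e3, e4]
      rw [map_add, map_add, map_one]
      have e5 : aeval f ((C l⁻¹ * X - 1)^n * q1'.comp (C l⁻¹ * X - 1))
          = aeval f (q1'.comp (C l⁻¹ * X - 1)) * (aeval f (C l⁻¹ * X - 1))^n := by
        rw [mul_comm ((C l⁻¹ * X - 1)^n) _, map_mul, map_pow]
      rw [ContinuousLinearMap.add_apply, ContinuousLinearMap.add_apply, e5,
        ContinuousLinearMap.mul_apply, hmn, map_zero, add_zero,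
        ContinuousLinearMap.one_apply, haevm]
    rw [hstep, hB, hsum]
    rw [ContinuousLinearMap.sub_apply, ContinuousLinearMap.smul_apply,
      ContinuousLinearMap.one_apply, add_comm, sub_add_cancel, smul_smul,
      mul_inv_cancel₀ hl0, one_smul]
  -- uniqueness formula
  have formula : ∀ h : E →L[ℂ] E, spectrum ℂ h ⊆ Sigma1 → expEnd h = f →
      ∀ l ∈ spectrum ℂ f, ∀ x ∈ (clmAlgEquiv E f).maxGenEigenspace l,
      h x = sLog l • x + (twoPiI)⁻¹ • ((aeval (l⁻¹ • f - 1) (pLog n)) x) := by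
    intro h hspec hexp l hl x hx
    have hl0 : l ≠ 0 := fun h0 => hS0 (h0 ▸ hl)
    set V := (clmAlgEquiv E f).maxGenEigenspace l with hV
    have hcfh : Commute f h := by
      have h1 : Commute h (twoPiI • h) := (Commute.refl h).smul_right twoPiI
      have h2 : Commute h (expEnd h) := h1.exp_right
      rw [hexp] at h2
      exact h2.symm
    have hmaps : Set.MapsTo (clmAlgEquiv E h) V V :=
      Module.End.mapsTo_maxGenEigenspace_of_comm (hcfh.map (clmAlgEquiv E)) l
    set hr : Module.End ℂ V := (clmAlgEquiv E h).restrict hmaps with hhr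
    -- every eigenvalue of hr is sLog l
    have heig : ∀ c : ℂ, hr.HasEigenvalue c → c = sLog l := by
      intro c hc
      obtain ⟨v, hv⟩ := hc.exists_hasEigenvector
      have hvne : (v : E) ≠ 0 := fun h0 => hv.2 (Subtype.ext h0)
      have hveq : h (v : E) = c • (v : E) := by
        have := hv.apply_eq_smul
        have h3 := congrArg (Subtype.val) this
        exact h3
      have hcs : c ∈ spectrum ℂ h := by
        rw [spectrum_clm_eq, ← Module.End.hasEigenvalue_iff_mem_spectrum]
        apply Module.End.hasEigenvalue_of_hasEigenvector (x := (v : E))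
        exact ⟨Module.End.mem_eigenspace_iff.mpr (by simpa using hveq), hvne⟩
      have hbv : (twoPiI • h - algebraMap ℂ (E →L[ℂ] E) (twoPiI * c)) (v : E) = 0 := by
        rw [ContinuousLinearMap.sub_apply, ContinuousLinearMap.smul_apply, hveq,
          Algebra.algebraMap_eq_smul_one, ContinuousLinearMap.smul_apply,
          ContinuousLinearMap.one_apply, smul_smul, sub_self]
      have hexpv : expEnd h (v : E) = Complex.exp (twoPiI * c) • (v : E) := by
        have hsplit : twoPiI • h = algebraMap ℂ (E →L[ℂ] E) (twoPiI * c)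
            + (twoPiI • h - algebraMap ℂ (E →L[ℂ] E) (twoPiI * c)) := by abel
        rw [expEnd, hsplit, exp_algebraMap_add, ContinuousLinearMap.smul_apply]
        congr 1
        rw [exp_apply_eq_aeval_pExp _ _ 1 (by rw [pow_one]; exact hbv), pExp_one, map_one,
          ContinuousLinearMap.one_apply]
      have hfv : f (v : E) = Complex.exp (twoPiI * c) • (v : E) := by
        rw [← hexp, hexpv]
      have hkill : ((f - l • (1 : E →L[ℂ] E))^n) (v : E) = 0 := hgen l (v : E) v.2
      rw [pow_sub_smul_apply_eigen hfv] at hkill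
      have h5 : Complex.exp (twoPiI * c) - l = 0 := by
        have h6 := (smul_eq_zero.mp hkill).resolve_right hvne
        exact pow_eq_zero_iff (by omega : n ≠ 0) |>.mp h6
      have h7 : Complex.exp (twoPiI * c) = l := sub_eq_zero.mp h5
      apply sigma1_exp_inj (hspec hcs) (sLog_mem_Sigma1 hl0)
      rw [h7, exp_twoPiI_sLog hl0]
    -- nilpotency on V
    have hNn : ∀ y ∈ V, ((h - sLog l • (1 : E →L[ℂ] E))^n) y = 0 := by
      have hmaps2 : ∀ z ∈ V, (clmAlgEquiv E h - sLog l • (1 : Module.End ℂ E)) z ∈ V := by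
        intro z hz
        have h1 : (clmAlgEquiv E h) z ∈ V := hmaps hz
        have h2 : (clmAlgEquiv E h - sLog l • 1) z = (clmAlgEquiv E h) z - sLog l • z := by
          simp
        rw [h2]
        exact Submodule.sub_mem _ h1 (Submodule.smul_mem _ _ hz)
      set N : Module.End ℂ V :=
        (clmAlgEquiv E h - sLog l • (1 : Module.End ℂ E)).restrict hmaps2 with hNdef
      have hNeig : ∀ c : ℂ, c ≠ 0 → N.maxGenEigenspace c = ⊥ := by
        intro c hc
        by_contra hne
        have h1 : N.HasEigenvalue c := by
          apply Module.End.hasEigenvalue_of_hasGenEigenvalue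
            (k := Module.finrank ℂ V)
          rw [Module.End.hasGenEigenvalue_iff,
            ← Module.End.maxGenEigenspace_eq_genEigenspace_finrank]
          exact hne
        obtain ⟨w, hw⟩ := h1.exists_hasEigenvector
        have h2 : hr w = (c + sLog l) • w := by
          apply Subtype.ext
          have h3 := congrArg (Subtype.val) hw.apply_eq_smul
          rw [hNdef, LinearMap.restrict_coe_apply, LinearMap.sub_apply,
            LinearMap.smul_apply, Module.End.one_apply] at h3
          have h4 : (clmAlgEquiv E h) (w : E) = c • (w : E) + sLog l • (w : E) := by
            rw [sub_eq_iff_eq_add] at h3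
            simpa using h3
          change (clmAlgEquiv E h) (w : E) = _
          rw [h4]
          simp [add_smul]
        have h4 : hr.HasEigenvalue (c + sLog l) :=
          Module.End.hasEigenvalue_of_hasEigenvector
            ⟨Module.End.mem_eigenspace_iff.mpr h2, hw.2⟩
        have h5 := heig _ h4
        apply hc
        have h6 : c + sLog l - sLog l = 0 := by rw [h5]; ring
        simpa using h6
      have h0top : N.maxGenEigenspace 0 = ⊤ := by
        apply le_antisymm le_top
        rw [← Module.End.iSup_maxGenEigenspace_eq_top N]
        apply iSup_le
        intro c
        by_cases hc : c = 0
        · rw [hc]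
        · rw [hNeig c hc]
          exact bot_le
      have hNpow : N ^ (Module.finrank ℂ V) = 0 := by
        apply LinearMap.ext
        intro w
        have hw : w ∈ N.maxGenEigenspace 0 := h0top ▸ Submodule.mem_top
        rw [Module.End.maxGenEigenspace_eq_genEigenspace_finrank,
          Module.End.mem_genEigenspace_nat] at hw
        simpa using hw
      have hNn0 : N ^ n = 0 := by
        have hd : Module.finrank ℂ V ≤ n := Submodule.finrank_le V
        calc N^n = N^(n - Module.finrank ℂ V) * N^(Module.finrank ℂ V) := by
              rw [← pow_add]; congr 1; omega
        _ = 0 := by rw [hNpow, mul_zero]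
      intro y hy
      rw [hNdef, Module.End.pow_restrict n hmaps2] at hNn0
      have h6 := congrArg (Subtype.val) (congrArg (fun T : Module.End ℂ V => T ⟨y, hy⟩) hNn0)
      simp only [LinearMap.restrict_coe_apply, LinearMap.zero_apply] at h6
      have h8 : ((clmAlgEquiv E h - sLog l • (1 : Module.End ℂ E))^n) y = 0 := by
        simpa using h6
      rw [pow_sub_smul_apply_coe] at h8
      exact h8
    -- the log formula
    set b := twoPiI • h - algebraMap ℂ (E →L[ℂ] E) (twoPiI * sLog l) with hbdef
    have hbfact : b = twoPiI • (h - sLog l • (1 : E →L[ℂ] E)) := by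
      rw [hbdef, smul_sub, Algebra.algebraMap_eq_smul_one, smul_smul]
    have hbny : ∀ y ∈ V, (b^n) y = 0 := by
      intro y hy
      rw [hbfact, _root_.smul_pow, ContinuousLinearMap.smul_apply, hNn y hy, smul_zero]
    have hbV : ∀ y ∈ V, b y ∈ V := by
      intro y hy
      rw [hbfact, ContinuousLinearMap.smul_apply, ContinuousLinearMap.sub_apply,
        ContinuousLinearMap.smul_apply, ContinuousLinearMap.one_apply]
      apply Submodule.smul_mem
      exact Submodule.sub_mem _ (hmaps hy) (Submodule.smul_mem _ _ hy)
    have hexpy : ∀ y ∈ V, (aeval b (pExp n)) y = l⁻¹ • f y := by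
      intro y hy
      have h7 := expand h (sLog l) y (hbny y hy)
      rw [hexp, exp_twoPiI_sLog hl0] at h7
      rw [← hbdef] at h7
      rw [h7, smul_smul, inv_mul_cancel₀ hl0, one_smul]
    set u := aeval b (pExp n) - 1 with hudef
    have huV : ∀ y ∈ V, u y ∈ V := by
      intro y hy
      rw [hudef, ContinuousLinearMap.sub_apply, ContinuousLinearMap.one_apply]
      exact Submodule.sub_mem _ (aeval_mem_of_mapsTo hbV _ hy) hy
    have hfV : ∀ y ∈ V, f y ∈ V := by
      intro y hy
      exact Module.End.mapsTo_maxGenEigenspace_of_comm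
        (Commute.refl (clmAlgEquiv E f)) l hy
    have hmV : ∀ y ∈ V, (l⁻¹ • f - 1) y ∈ V := by
      intro y hy
      rw [ContinuousLinearMap.sub_apply, ContinuousLinearMap.smul_apply,
        ContinuousLinearMap.one_apply]
      exact Submodule.sub_mem _ (Submodule.smul_mem _ _ (hfV y hy)) hy
    have hum : ∀ y ∈ V, u y = (l⁻¹ • f - 1) y := by
      intro y hy
      rw [hudef, ContinuousLinearMap.sub_apply, ContinuousLinearMap.one_apply, hexpy y hy,
        ContinuousLinearMap.sub_apply, ContinuousLinearMap.smul_apply,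
        ContinuousLinearMap.one_apply]
    have hq2' := key2 nn
    rw [← hnn] at hq2'
    obtain ⟨q2, hq2⟩ := hq2'
    have hcompkey2 : (pLog n).comp (pExp n - 1) = X + X^n * q2 := by
      linear_combination hq2
    have hbnx : (b^n) x = 0 := hbny x hx
    have e6 : (aeval b ((pLog n).comp (pExp n - 1))) x = b x := by
      rw [hcompkey2, map_add, ContinuousLinearMap.add_apply, aeval_X]
      have e7 : aeval b (X^n * q2) = aeval b q2 * b^n := by
        rw [mul_comm, map_mul]
        simp only [map_pow, aeval_X]
      rw [e7, ContinuousLinearMap.mul_apply, hbnx, map_zero, add_zero]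
    have e8 : aeval b ((pLog n).comp (pExp n - 1)) = aeval u (pLog n) := by
      rw [aeval_comp, map_sub, map_one, ← hudef]
    have e9 : b x = (aeval (l⁻¹ • f - 1) (pLog n)) x := by
      rw [← e6, e8]
      exact aeval_apply_eq_of_eqOn huV hum hmV _ hx
    have e10 : twoPiI • (h x) - (twoPiI * sLog l) • x
        = (aeval (l⁻¹ • f - 1) (pLog n)) x := by
      rw [← e9, hbdef, ContinuousLinearMap.sub_apply, ContinuousLinearMap.smul_apply,
        Algebra.algebraMap_eq_smul_one, ContinuousLinearMap.smul_apply,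
        ContinuousLinearMap.one_apply]
    have e12 : twoPiI • h x = (twoPiI * sLog l) • x
        + (aeval (l⁻¹ • f - 1) (pLog n)) x := by
      rw [← e10]; abel
    calc h x = twoPiI⁻¹ • (twoPiI • h x) := by
          rw [smul_smul, inv_mul_cancel₀ twoPiI_ne_zero, one_smul]
    _ = sLog l • x + twoPiI⁻¹ • ((aeval (l⁻¹ • f - 1) (pLog n)) x) := by
          rw [e12, smul_add, smul_smul, ← mul_assoc, inv_mul_cancel₀ twoPiI_ne_zero, one_mul]
  -- conclusion
  refine ⟨g, ⟨hgspec, hgexp⟩, ?_⟩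
  intro y hy
  apply span
  intro l hl x hx
  rw [formula y hy.1 hy.2 l hl x hx, formula g hgspec hgexp l hl x hx]
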